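/- Let H be a Hilbert space and let D(t), t ∈ S¹, be a family of self-adjoint operators on H of the form D(t) = A + B(t) where A is a fixed invertible self-adjoint operator with domain W ⊆ H (compactly embedded), and t ↦ B(t) is a continuous family of bounded symmetric operators. Then the operator d/dt + D(t) : H¹(S¹,H) ∩ L²(S¹,W) → L²(S¹,H) satisfies the elliptic estimate ‖x‖_{H¹(S¹,H)} + ‖x‖_{L²(S¹,W)} ≤ C(‖(d/dt + D(t))x‖_{L²(S¹,H)} + ‖x‖_{L²(S¹,H)}). -/

import Mathlib

open Asymptotics

/-- If `φ` has derivative `d` at `t`, vanishes at `t`, and `η` is continuous at `t`,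
then `s ↦ ⟪φ s, η s⟫` has derivative `⟪d, η t⟫` at `t`. -/
lemma aux_deriv_inner {E : Type*} [NormedAddCommGroup E] [InnerProductSpace ℝ E]
    {φ η : ℝ → E} {t : ℝ} {d : E} (hφ : HasDerivAt φ d t) (hφ0 : φ t = 0)
    (hη : ContinuousAt η t) :
    HasDerivAt (fun s => (inner ℝ (φ s) (η s) : ℝ)) (inner ℝ d (η t)) t := by
  have h1 : HasDerivAt (fun s => (inner ℝ (φ s) (η t) : ℝ)) (inner ℝ d (η t)) t := by
    have := (innerSL ℝ (η t)).hasFDerivAt.comp_hasDerivAt t hφ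
    simpa [real_inner_comm, Function.comp_def] using this
  have h2 : HasDerivAt (fun s => (inner ℝ (φ s) (η s - η t) : ℝ)) 0 t := by
    rw [hasDerivAt_iff_isLittleO]
    simp only [hφ0, inner_zero_left, smul_zero, sub_zero]
    have hbig : (fun s => φ s) =O[nhds t] fun s => s - t := by
      simpa [hφ0] using hφ.hasFDerivAt.isBigO_sub
    have hlit : (fun s => η s - η t) =o[nhds t] fun _ => (1:ℝ) := by
      rw [Asymptotics.isLittleO_one_iff]
      have : Filter.Tendsto (fun s => η s - η t) (nhds t) (nhds (η t - η t)) :=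
        hη.tendsto.sub tendsto_const_nhds
      simpa using this
    have hmul := hbig.norm_left.mul_isLittleO hlit.norm_left
    have hb : (fun s => (inner ℝ (φ s) (η s - η t) : ℝ)) =O[nhds t]
        fun s => ‖φ s‖ * ‖η s - η t‖ := by
      apply Asymptotics.IsBigO.of_bound 1
      filter_upwards with s
      simpa using abs_real_inner_le_norm (φ s) (η s - η t)
    exact hb.trans_isLittleO (by simpa using hmul)
  have heq : (fun s => (inner ℝ (φ s) (η t) : ℝ) + inner ℝ (φ s) (η s - η t)) =
      fun s => (inner ℝ (φ s) (η s) : ℝ) := by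
    funext s
    rw [← inner_add_right]
    simp
  have := h1.add h2
  simp only [Pi.add_def, heq] at this
  simpa using this

theorem stmt_19 {H W : Type*}
    [NormedAddCommGroup H] [InnerProductSpace ℝ H] [CompleteSpace H]
    [NormedAddCommGroup W] [InnerProductSpace ℝ W] [CompleteSpace W]
    (ι : W →L[ℝ] H) (hι : Function.Injective ι) (hιdense : DenseRange ι)
    (hιcompact : IsCompactOperator (⇑ι))
    (A : W →L[ℝ] H)
    (hAsym : ∀ v w : W, (inner ℝ (A v) (ι w) : ℝ) = inner ℝ (ι v) (A w))
    (Ainv : H →L[ℝ] W) (hAinv₁ : ∀ h, A (Ainv h) = h) (hAinv₂ : ∀ w, Ainv (A w) = w)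
    (B : ℝ → (H →L[ℝ] H)) (hBcont : Continuous B)
    (hBper : ∀ t, B (t + 2 * Real.pi) = B t)
    (hBsym : ∀ t, ∀ x y : H, (inner ℝ (B t x) y : ℝ) = inner ℝ x (B t y)) :
    ∃ C : ℝ, 0 < C ∧ ∀ (x : ℝ → W) (x' : ℝ → H),
      Continuous x → Continuous x' →
      (∀ t, x (t + 2 * Real.pi) = x t) →
      (∀ t, HasDerivAt (fun s => ι (x s)) (x' t) t) →
      (∫ t in (0:ℝ)..(2 * Real.pi), (‖ι (x t)‖ ^ 2 + ‖x' t‖ ^ 2 + ‖x t‖ ^ 2)) ≤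
        C * ((∫ t in (0:ℝ)..(2 * Real.pi), ‖x' t + A (x t) + B t (ι (x t))‖ ^ 2) +
          ∫ t in (0:ℝ)..(2 * Real.pi), ‖ι (x t)‖ ^ 2) := by
  have h2π : (0:ℝ) ≤ 2 * Real.pi := by positivity
  -- bound on ‖B t‖ over [0, 2π]
  obtain ⟨M, hMub⟩ := ((isCompact_Icc (a := (0:ℝ)) (b := 2 * Real.pi)).image
    (continuous_norm.comp hBcont)).bddAbove
  have hM : ∀ t ∈ Set.Icc (0:ℝ) (2 * Real.pi), ‖B t‖ ≤ M := by
    intro t ht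
    exact hMub (Set.mem_image_of_mem _ ht)
  have hM0 : 0 ≤ M :=
    le_trans (norm_nonneg (B 0)) (hM 0 ⟨le_refl 0, h2π⟩)
  set K : ℝ := ‖Ainv‖ with hKdef
  have hK0 : 0 ≤ K := norm_nonneg _
  refine ⟨2 * (1 + K ^ 2) * (1 + M ^ 2) + 1, by positivity, ?_⟩
  intro x x' hx hx' hper hderiv
  set u : ℝ → H := fun t => ι (x t) with hu_def
  set f : ℝ → H := fun t => x' t + A (x t) + B t (ι (x t)) with hf_def
  have hu : Continuous u := ι.continuous.comp hx
  have hAx : Continuous fun t => A (x t) := A.continuous.comp hx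
  have hfcont : Continuous f := (hx'.add hAx).add (hBcont.clm_apply hu)
  -- derivative of ψ t = ⟪A (x t), ι (x t)⟫
  have hψ : ∀ t₀ : ℝ, HasDerivAt (fun t => (inner ℝ (A (x t)) (ι (x t)) : ℝ))
      (2 * inner ℝ (x' t₀) (A (x t₀))) t₀ := by
    intro t₀
    have key : (fun t => (inner ℝ (A (x t)) (ι (x t)) : ℝ)) =
        fun s => (inner ℝ (A (x t₀)) (ι (x t₀)) : ℝ) +
          inner ℝ (ι (x s) - ι (x t₀)) (A (x s) + A (x t₀)) := by
      funext s
      have e1 : (inner ℝ (A (x s)) (ι (x t₀)) : ℝ) = inner ℝ (ι (x s)) (A (x t₀)) :=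
        hAsym (x s) (x t₀)
      have e2 : (inner ℝ (ι (x t₀)) (A (x s)) : ℝ) = inner ℝ (ι (x s)) (A (x t₀)) := by
        rw [real_inner_comm]; exact e1
      have e3 : (inner ℝ (A (x s)) (ι (x s)) : ℝ) = inner ℝ (ι (x s)) (A (x s)) :=
        real_inner_comm _ _
      have e4 : (inner ℝ (A (x t₀)) (ι (x t₀)) : ℝ) = inner ℝ (ι (x t₀)) (A (x t₀)) :=
        real_inner_comm _ _
      simp only [inner_sub_left, inner_add_right]
      linarith
    rw [key]
    have hd : HasDerivAt (fun s => ι (x s) - ι (x t₀)) (x' t₀) t₀ :=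
      (hderiv t₀).sub_const _
    have hcont : ContinuousAt (fun s => A (x s) + A (x t₀)) t₀ :=
      ((hAx.add continuous_const).continuousAt)
    have := (aux_deriv_inner hd (by simp) hcont).const_add
      ((inner ℝ (A (x t₀)) (ι (x t₀)) : ℝ))
    have heq : (inner ℝ (x' t₀) (A (x t₀) + A (x t₀)) : ℝ) =
        2 * inner ℝ (x' t₀) (A (x t₀)) := by
      rw [inner_add_right]; ring
    rw [heq] at this
    exact this
  -- integrability facts
  have int_x' : IntervalIntegrable (fun t => ‖x' t‖ ^ 2) MeasureTheory.volume 0 (2 * Real.pi) :=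
    ((hx'.norm.pow 2)).intervalIntegrable _ _
  have int_Ax : IntervalIntegrable (fun t => ‖A (x t)‖ ^ 2) MeasureTheory.volume 0 (2 * Real.pi) :=
    ((hAx.norm.pow 2)).intervalIntegrable _ _
  have int_inner : IntervalIntegrable (fun t => 2 * (inner ℝ (x' t) (A (x t)) : ℝ))
      MeasureTheory.volume 0 (2 * Real.pi) :=
    ((continuous_const.mul (hx'.inner hAx))).intervalIntegrable _ _
  have int_u : IntervalIntegrable (fun t => ‖u t‖ ^ 2) MeasureTheory.volume 0 (2 * Real.pi) :=
    ((hu.norm.pow 2)).intervalIntegrable _ _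
  have int_f : IntervalIntegrable (fun t => ‖f t‖ ^ 2) MeasureTheory.volume 0 (2 * Real.pi) :=
    ((hfcont.norm.pow 2)).intervalIntegrable _ _
  have int_x : IntervalIntegrable (fun t => ‖x t‖ ^ 2) MeasureTheory.volume 0 (2 * Real.pi) :=
    ((hx.norm.pow 2)).intervalIntegrable _ _
  -- the cross term vanishes
  have hcross : (∫ t in (0:ℝ)..(2 * Real.pi), 2 * (inner ℝ (x' t) (A (x t)) : ℝ)) = 0 := by
    have hint := intervalIntegral.integral_eq_sub_of_hasDerivAt
      (f := fun t => (inner ℝ (A (x t)) (ι (x t)) : ℝ))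
      (f' := fun t => 2 * (inner ℝ (x' t) (A (x t)) : ℝ))
      (fun t ht => hψ t) int_inner
    have hxper : x (2 * Real.pi) = x 0 := by simpa using hper 0
    rw [hint]
    rw [hxper, sub_self]
  -- orthogonality identity
  have hsum : (∫ t in (0:ℝ)..(2 * Real.pi), ‖x' t + A (x t)‖ ^ 2) =
      (∫ t in (0:ℝ)..(2 * Real.pi), ‖x' t‖ ^ 2) +
      (∫ t in (0:ℝ)..(2 * Real.pi), ‖A (x t)‖ ^ 2) := by
    have hpt : (fun t => ‖x' t + A (x t)‖ ^ 2) =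
        fun t => ‖x' t‖ ^ 2 + ‖A (x t)‖ ^ 2 + 2 * (inner ℝ (x' t) (A (x t)) : ℝ) := by
      funext t
      rw [norm_add_sq_real]; ring
    rw [hpt, intervalIntegral.integral_add (int_x'.add int_Ax) int_inner,
      intervalIntegral.integral_add int_x' int_Ax, hcross, add_zero]
  -- pointwise bound by f and u, valid on [0, 2π]
  have hptbd : ∀ t ∈ Set.Icc (0:ℝ) (2 * Real.pi),
      ‖x' t + A (x t)‖ ^ 2 ≤ 2 * ‖f t‖ ^ 2 + 2 * M ^ 2 * ‖u t‖ ^ 2 := by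
    intro t ht
    have h1 : x' t + A (x t) = f t - B t (u t) := by
      simp [hf_def, hu_def]
    have h2 : ‖B t (u t)‖ ≤ M * ‖u t‖ :=
      le_trans ((B t).le_opNorm (u t)) (by
        have := hM t ht
        exact mul_le_mul_of_nonneg_right this (norm_nonneg _))
    have h3 : ‖x' t + A (x t)‖ ≤ ‖f t‖ + M * ‖u t‖ := by
      rw [h1]
      exact le_trans (norm_sub_le _ _) (by linarith)
    have h4 : (0:ℝ) ≤ ‖x' t + A (x t)‖ := norm_nonneg _
    nlinarith [norm_nonneg (f t), norm_nonneg (u t), sq_nonneg (‖f t‖ - M * ‖u t‖)]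
  have hbd : (∫ t in (0:ℝ)..(2 * Real.pi), ‖x' t + A (x t)‖ ^ 2) ≤
      2 * (∫ t in (0:ℝ)..(2 * Real.pi), ‖f t‖ ^ 2) +
      2 * M ^ 2 * (∫ t in (0:ℝ)..(2 * Real.pi), ‖u t‖ ^ 2) := by
    have := intervalIntegral.integral_mono_on (μ := MeasureTheory.volume) h2π
      (((hx'.add hAx).norm.pow 2).intervalIntegrable _ _)
      (((int_f.const_mul 2).add (int_u.const_mul (2 * M ^ 2)))) hptbd
    calc (∫ t in (0:ℝ)..(2 * Real.pi), ‖x' t + A (x t)‖ ^ 2)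
        ≤ ∫ t in (0:ℝ)..(2 * Real.pi), (2 * ‖f t‖ ^ 2 + 2 * M ^ 2 * ‖u t‖ ^ 2) := this
      _ = 2 * (∫ t in (0:ℝ)..(2 * Real.pi), ‖f t‖ ^ 2) +
          2 * M ^ 2 * (∫ t in (0:ℝ)..(2 * Real.pi), ‖u t‖ ^ 2) := by
          rw [intervalIntegral.integral_add (int_f.const_mul 2) (int_u.const_mul (2 * M ^ 2)),
            intervalIntegral.integral_const_mul, intervalIntegral.integral_const_mul]
  -- W-norm controlled by A
  have hxbd : (∫ t in (0:ℝ)..(2 * Real.pi), ‖x t‖ ^ 2) ≤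
      K ^ 2 * (∫ t in (0:ℝ)..(2 * Real.pi), ‖A (x t)‖ ^ 2) := by
    rw [← intervalIntegral.integral_const_mul]
    apply intervalIntegral.integral_mono_on h2π int_x (int_Ax.const_mul _)
    intro t ht
    have h1 : ‖x t‖ ≤ K * ‖A (x t)‖ := by
      have := Ainv.le_opNorm (A (x t))
      rw [hAinv₂ (x t)] at this
      exact this
    nlinarith [norm_nonneg (x t), norm_nonneg (A (x t))]
  -- nonnegativity of integrals
  have hIf : 0 ≤ ∫ t in (0:ℝ)..(2 * Real.pi), ‖f t‖ ^ 2 :=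
    intervalIntegral.integral_nonneg h2π (fun t _ => by positivity)
  have hIu : 0 ≤ ∫ t in (0:ℝ)..(2 * Real.pi), ‖u t‖ ^ 2 :=
    intervalIntegral.integral_nonneg h2π (fun t _ => by positivity)
  have hIx' : 0 ≤ ∫ t in (0:ℝ)..(2 * Real.pi), ‖x' t‖ ^ 2 :=
    intervalIntegral.integral_nonneg h2π (fun t _ => by positivity)
  have hIAx : 0 ≤ ∫ t in (0:ℝ)..(2 * Real.pi), ‖A (x t)‖ ^ 2 :=
    intervalIntegral.integral_nonneg h2π (fun t _ => by positivity)
  -- split the left-hand side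
  have hsplit : (∫ t in (0:ℝ)..(2 * Real.pi), (‖ι (x t)‖ ^ 2 + ‖x' t‖ ^ 2 + ‖x t‖ ^ 2)) =
      (∫ t in (0:ℝ)..(2 * Real.pi), ‖u t‖ ^ 2) +
      (∫ t in (0:ℝ)..(2 * Real.pi), ‖x' t‖ ^ 2) +
      (∫ t in (0:ℝ)..(2 * Real.pi), ‖x t‖ ^ 2) := by
    rw [intervalIntegral.integral_add (int_u.add int_x') int_x,
      intervalIntegral.integral_add int_u int_x']
  rw [hsplit]
  have hgoal_rhs : (∫ t in (0:ℝ)..(2 * Real.pi), ‖x' t + A (x t) + B t (ι (x t))‖ ^ 2) =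
      ∫ t in (0:ℝ)..(2 * Real.pi), ‖f t‖ ^ 2 := rfl
  rw [hgoal_rhs]
  set If := ∫ t in (0:ℝ)..(2 * Real.pi), ‖f t‖ ^ 2
  set Iu := ∫ t in (0:ℝ)..(2 * Real.pi), ‖u t‖ ^ 2
  set Ix' := ∫ t in (0:ℝ)..(2 * Real.pi), ‖x' t‖ ^ 2
  set IAx := ∫ t in (0:ℝ)..(2 * Real.pi), ‖A (x t)‖ ^ 2
  set Ix := ∫ t in (0:ℝ)..(2 * Real.pi), ‖x t‖ ^ 2
  have hmain : Ix' + IAx ≤ 2 * If + 2 * M ^ 2 * Iu := by rw [← hsum]; exact hbd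
  nlinarith [mul_nonneg (sq_nonneg K) hIf, mul_nonneg (sq_nonneg M) hIf,
    mul_nonneg (sq_nonneg K) hIu, mul_nonneg (sq_nonneg M) hIu,
    mul_nonneg (mul_nonneg (sq_nonneg K) (sq_nonneg M)) hIf,
    mul_nonneg (mul_nonneg (sq_nonneg K) (sq_nonneg M)) hIu,
    mul_nonneg (sq_nonneg K) hIAx, mul_nonneg (sq_nonneg M) hIAx, hIAx]
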